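/- For a tetrahedron, the same pseudoface squared-area identity holds with the complementary pair of faces: 4L² = Δ₂² + Δ₃² − 2Δ₂Δ₃ cos A, where A is the dihedral angle along edge OA between faces OCA and OAB, and L is the medial parallelogram area for the edge pair (OA, BC). In particular Δ₀² + Δ₁² − 2Δ₀Δ₁ cos X = Δ₂² + Δ₃² − 2Δ₂Δ₃ cos A. -/

import Mathlib

open RealInnerProductSpace

noncomputable def cross3 (u v : EuclideanSpace ℝ (Fin 3)) : EuclideanSpace ℝ (Fin 3) :=
  (WithLp.equiv 2 (Fin 3 → ℝ)).symm
    ![u 1 * v 2 - u 2 * v 1, u 2 * v 0 - u 0 * v 2, u 0 * v 1 - u 1 * v 0]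

lemma cos_aux (u v : EuclideanSpace ℝ (Fin 3)) (c : ℝ)
    (hc : c = -(⟪u, v⟫ / (‖u‖ * ‖v‖))) :
    -(2 * (‖u‖/2) * (‖v‖/2) * c) = ⟪u, v⟫ / 2 := by
  rcases eq_or_ne (‖u‖ * ‖v‖) 0 with h0 | h0
  · rcases mul_eq_zero.1 h0 with h | h
    · rw [norm_eq_zero] at h
      simp [h, hc]
    · rw [norm_eq_zero] at h
      simp [h, hc]
  · rw [hc]
    field_simp
    field_simp [left_ne_zero_of_mul h0, right_ne_zero_of_mul h0]

lemma cross_id1 (O A B C : EuclideanSpace ℝ (Fin 3)) :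
    cross3 (A - O) (C - B) = -(cross3 (C - O) (A - O) + cross3 (A - O) (B - O)) := by
  ext i
  fin_cases i <;>
    simp [cross3, WithLp.equiv_symm_apply, PiLp.toLp_apply, PiLp.neg_apply, PiLp.add_apply, PiLp.sub_apply] <;> ring

lemma cross_id2 (O A B C : EuclideanSpace ℝ (Fin 3)) :
    cross3 (B - A) (C - A) + cross3 (C - O) (B - O) =
      cross3 (C - O) (A - O) + cross3 (A - O) (B - O) := by
  ext i
  fin_cases i <;>
    simp [cross3, WithLp.equiv_symm_apply, PiLp.toLp_apply, PiLp.neg_apply, PiLp.add_apply, PiLp.sub_apply] <;> ring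

theorem pseudoface_law_of_cosines_complementary (O A B C : EuclideanSpace ℝ (Fin 3))
    (h : AffineIndependent ℝ ![O, A, B, C]) (Δ₀ Δ₁ Δ₂ Δ₃ L X dihA : ℝ)
    (hΔ₀ : Δ₀ = ‖cross3 (B - A) (C - A)‖ / 2)
    (hΔ₁ : Δ₁ = ‖cross3 (B - O) (C - O)‖ / 2)
    (hΔ₂ : Δ₂ = ‖cross3 (C - O) (A - O)‖ / 2)
    (hΔ₃ : Δ₃ = ‖cross3 (A - O) (B - O)‖ / 2)
    (hL : L = ‖cross3 (A - O) (C - B)‖ / 4)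
    (hX : Real.cos X =
      -(⟪cross3 (B - A) (C - A), cross3 (C - O) (B - O)⟫ /
        (‖cross3 (B - A) (C - A)‖ * ‖cross3 (C - O) (B - O)‖)))
    (hA : Real.cos dihA =
      -(⟪cross3 (C - O) (A - O), cross3 (A - O) (B - O)⟫ /
        (‖cross3 (C - O) (A - O)‖ * ‖cross3 (A - O) (B - O)‖))) :
    4 * L^2 = Δ₂^2 + Δ₃^2 - 2 * Δ₂ * Δ₃ * Real.cos dihA ∧
      Δ₀^2 + Δ₁^2 - 2 * Δ₀ * Δ₁ * Real.cos X =
        Δ₂^2 + Δ₃^2 - 2 * Δ₂ * Δ₃ * Real.cos dihA := by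
  set n2 := cross3 (C - O) (A - O) with hn2
  set n3 := cross3 (A - O) (B - O) with hn3
  set m0 := cross3 (B - A) (C - A) with hm0
  set m1 := cross3 (C - O) (B - O) with hm1
  have hcos1 := cos_aux n2 n3 (Real.cos dihA) hA
  have hcos2 := cos_aux m0 m1 (Real.cos X) hX
  have hsq1 : ‖n2 + n3‖^2 = ‖n2‖^2 + 2 * ⟪n2, n3⟫ + ‖n3‖^2 := norm_add_sq_real n2 n3
  have hsq2 : ‖m0 + m1‖^2 = ‖m0‖^2 + 2 * ⟪m0, m1⟫ + ‖m1‖^2 := norm_add_sq_real m0 m1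
  have hnL : ‖cross3 (A - O) (C - B)‖ = ‖n2 + n3‖ := by
    rw [hn2, hn3, cross_id1, norm_neg]
  have hnm : ‖m0 + m1‖^2 = ‖n2 + n3‖^2 := by
    rw [hm0, hm1, hn2, hn3, cross_id2]
  have hrev : ‖cross3 (B - O) (C - O)‖ = ‖m1‖ := by
    have e : cross3 (B - O) (C - O) = -m1 := by
      ext i
      fin_cases i <;>
        simp [hm1, cross3, WithLp.equiv_symm_apply, PiLp.toLp_apply, PiLp.neg_apply, PiLp.sub_apply] <;> ring
    rw [e, norm_neg]
  subst hΔ₀ hΔ₁ hΔ₂ hΔ₃ hL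
  rw [hnL, hrev]
  constructor
  · linear_combination hsq1 / 4 - hcos1
  · linear_combination hcos2 - hcos1 - hsq2 / 4 + hsq1 / 4 + hnm / 4
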